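/- If the refuter's initial node lies in U^j_i, then i ≤ j; in particular every play following an optimal refuter strategy reaches the error state within j−1 steps and contains at most i faults. -/

import Mathlib

/-- A labelled transition system with state type `S`, label type `L`. -/
structure TS (S L : Type) where
  step : S → L → S → Prop
  init : S

/-- Strong masking simulation between a nominal system `A` (over `Σ = L \ F`)
and an implementation `A'` (over `Σ ∪ F`), where the nominal system is
augmented with masking self-loops (so the mask-move condition B.3 asks for a
state `t` with `s →M t`, i.e. `t = s`, related to `t'`). -/
def IsMaskingSim {S S' L : Type} (A : TS S L) (A' : TS S' L) (F : Set L)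
    (M : S → S' → Prop) : Prop :=
  M A.init A'.init ∧
  ∀ s s', M s s' →
    (∀ e, e ∉ F → ∀ t, A.step s e t → ∃ t', A'.step s' e t' ∧ M t t') ∧
    (∀ e, e ∉ F → ∀ t', A'.step s' e t' → ∃ t, A.step s e t ∧ M t t') ∧
    (∀ f, f ∈ F → ∀ t', A'.step s' f t' → ∃ t, t = s ∧ M t t')

/-- States of the (strong) masking game graph: refuter states `(s, #, s', R)`,
verifier states `(s, σ^i, s', V)` (the `Bool` is `true` for side 1, i.e. a
pending label coming from the nominal system `A`, and `false` for side 2),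
and the error state. -/
inductive GS (S S' L : Type) : Type where
  | R : S → S' → GS S S' L
  | V : S → L → Bool → S' → GS S S' L
  | err : GS S S' L

/-- Basic edges of the masking game graph for nominal `A`, implementation `A'`,
fault labels `F` and masking label `m`. -/
inductive GEdge {S S' L : Type} (A : TS S L) (A' : TS S' L) (F : Set L) (m : L) :
    GS S S' L → L → GS S S' L → Prop where
  | chA {s s' σ t} : σ ∉ F → σ ≠ m → A.step s σ t →
      GEdge A A' F m (.R s s') σ (.V t σ true s')
  | chA' {s s' σ t'} : σ ≠ m → A'.step s' σ t' →
      GEdge A A' F m (.R s s') σ (.V s σ false t')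
  | matchA' {s σ s' t'} : σ ∉ F → σ ≠ m → A'.step s' σ t' →
      GEdge A A' F m (.V s σ true s') σ (.R s t')
  | matchA {s σ s' t} : σ ∉ F → σ ≠ m → A.step s σ t →
      GEdge A A' F m (.V s σ false s') σ (.R t s')
  | mask {s σ s'} : σ ∈ F →
      GEdge A A' F m (.V s σ false s') m (.R s s')

/-- Full edge relation of the masking game graph: basic edges, plus, for any
state with no outgoing basic edge (in particular the error state), edges
labelled by any `σ ∈ Σ` to the error state. -/
def fullEdge {S S' L : Type} (A : TS S L) (A' : TS S' L) (F : Set L) (m : L)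
    (v : GS S S' L) (σ : L) (w : GS S S' L) : Prop :=
  GEdge A A' F m v σ w ∨
    ((∀ l u, ¬ GEdge A A' F m v l u) ∧ σ ∉ F ∧ σ ≠ m ∧ w = GS.err)

/-- `true` on refuter states (including the error state). -/
def isRefB {S S' L : Type} : GS S S' L → Bool
  | .V _ _ _ _ => false
  | _ => true

/-- A verifier node whose pending label is a fault. -/
def isFaultV {S S' L : Type} (F : Set L) : GS S S' L → Prop
  | .V _ σ _ _ => σ ∈ F
  | _ => False

/-- The fault-stratified attractor sets `U^j_i` (first index `j`, second `i`):
`U^0_i = U^j_0 = ∅`, `U^1_1 = {err}`, and `U^{j+2}_{i+1}` collects refuter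
nodes with a successor in `U^{j+1}_{i+1}`, non-fault verifier nodes all of
whose successors are in `∪_{j'≤j+1} U^{j'}_{i+1}` with one in `U^{j+1}_{i+1}`,
and fault verifier nodes all of whose successors are in
`∪_{i'≤i, j'≤j+1} U^{j'}_{i'}` with one in `U^{j+1}_i`. -/
def Uset {α : Type} (post : α → Set α) (isRef isFault : α → Prop) (verr : α) :
    ℕ → ℕ → Set α
  | 0, _ => ∅
  | 1, i => if i = 1 then {verr} else ∅
  | _+2, 0 => ∅
  | j+2, i+1 =>
      {v | isRef v ∧ ∃ w ∈ post v, w ∈ Uset post isRef isFault verr (j+1) (i+1)} ∪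
      {v | ¬ isRef v ∧ ¬ isFault v ∧
            (∀ w ∈ post v, ∃ j' : Fin (j+2), w ∈ Uset post isRef isFault verr j' (i+1)) ∧
            ∃ w ∈ post v, w ∈ Uset post isRef isFault verr (j+1) (i+1)} ∪
      {v | ¬ isRef v ∧ isFault v ∧
            (∀ w ∈ post v, ∃ i' : Fin (i+1), ∃ j' : Fin (j+2),
              w ∈ Uset post isRef isFault verr j' i') ∧
            ∃ w ∈ post v, w ∈ Uset post isRef isFault verr (j+1) i}
  termination_by j _ => j
  decreasing_by all_goals first | exact j'.isLt | omega

/-- The sets `U^j_i` instantiated on the masking game graph of `A`, `A'`. -/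
def UsetG {S S' L : Type} (A : TS S L) (A' : TS S' L) (F : Set L) (m : L) :
    ℕ → ℕ → Set (GS S S' L) :=
  Uset (fun v => {w | ∃ l, fullEdge A A' F m v l w})
    (fun v => isRefB v = true) (isFaultV F) GS.err

/-- History-dependent strategies: given the history and the current state,
choose a label and a next state. -/
abbrev Strat (α L : Type) := List (α × L) → α → L × α

/-- The history (sequence of state/label pairs) of a play up to step `n`. -/
def hist {α L : Type} (ρ : ℕ → α) (σ : ℕ → L) (n : ℕ) : List (α × L) :=
  (List.range n).map fun k => (ρ k, σ k)

/-- `ρ, σ` form an (infinite) play of the graph `E` from `v0`. -/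
def IsPlay {α L : Type} (E : α → L → α → Prop) (v0 : α) (ρ : ℕ → α) (σ : ℕ → L) : Prop :=
  ρ 0 = v0 ∧ ∀ n, E (ρ n) (σ n) (ρ (n+1))

/-- The play `ρ, σ` conforms to the strategy `π` of the player owning the
states where `isRef · = mine`. -/
def Conf {α L : Type} (isRef : α → Bool) (mine : Bool) (π : Strat α L)
    (ρ : ℕ → α) (σ : ℕ → L) : Prop :=
  ∀ n, isRef (ρ n) = mine → (σ n, ρ (n+1)) = π (hist ρ σ n) (ρ n)

/-- Conformance to a memoryless (positional) strategy `f`. -/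
def MemConf {α L : Type} (isRef : α → Bool) (mine : Bool) (f : α → L × α)
    (ρ : ℕ → α) (σ : ℕ → L) : Prop :=
  ∀ n, isRef (ρ n) = mine → (σ n, ρ (n+1)) = f (ρ n)

/-- Auxiliary construction of the outcome of two strategies: history and
current state after `n` steps. -/
def outAux {α L : Type} (isRef : α → Bool) (πR πV : Strat α L) (v0 : α) :
    ℕ → List (α × L) × α
  | 0 => ([], v0)
  | n+1 =>
      let p := outAux isRef πR πV v0 n
      let c := if isRef p.2 then πR p.1 p.2 else πV p.1 p.2
      (p.1 ++ [(p.2, c.1)], c.2)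

/-- State sequence of the outcome `out(πR, πV)`. -/
def outSt {α L : Type} (isRef : α → Bool) (πR πV : Strat α L) (v0 : α) (n : ℕ) : α :=
  (outAux isRef πR πV v0 n).2

/-- Label sequence of the outcome `out(πR, πV)`. -/
def outLb {α L : Type} (isRef : α → Bool) (πR πV : Strat α L) (v0 : α) (n : ℕ) : L :=
  (if isRef (outSt isRef πR πV v0 n)
    then πR (outAux isRef πR πV v0 n).1 (outSt isRef πR πV v0 n)
    else πV (outAux isRef πR πV v0 n).1 (outSt isRef πR πV v0 n)).1

open Classical in
/-- The masking payoff `f_m(ρ) = lim_n pr1(v_n) / (1 + Σ_{i≤n} pr0(v_i))`,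
where `v_n = (χ_F(σ_n), χ_{err}(ρ_{n+1}))`. -/
noncomputable def payoff {α L : Type} (F : Set L) (verr : α)
    (ρ : ℕ → α) (σ : ℕ → L) : ℝ :=
  Filter.limUnder Filter.atTop fun n =>
    (if ρ (n+1) = verr then (1:ℝ) else 0) /
      (1 + ∑ i ∈ Finset.range (n+1), (if σ i ∈ F then (1:ℝ) else 0))

/-- Refuter strategies (valid at refuter nodes). -/
abbrev RStrat {S S' L : Type} (A : TS S L) (A' : TS S' L) (F : Set L) (m : L) :=
  {π : Strat (GS S S' L) L //
    ∀ h v, isRefB v = true → fullEdge A A' F m v (π h v).1 (π h v).2}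

/-- Verifier strategies (valid at verifier nodes). -/
abbrev VStrat {S S' L : Type} (A : TS S L) (A' : TS S' L) (F : Set L) (m : L) :=
  {π : Strat (GS S S' L) L //
    ∀ h v, isRefB v = false → fullEdge A A' F m v (π h v).1 (π h v).2}

/-- The value of the quantitative masking game (the masking distance
`δ_m(A, A')`): sup over refuter strategies of the inf over verifier
strategies of the payoff of the outcome play. -/
noncomputable def maskingValue {S S' L : Type} (A : TS S L) (A' : TS S' L)
    (F : Set L) (m : L) : ℝ :=
  ⨆ πR : RStrat A A' F m, ⨅ πV : VStrat A A' F m,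
    payoff F GS.err
      (outSt isRefB πR.1 πV.1 (GS.R A.init A'.init))
      (outLb isRefB πR.1 πV.1 (GS.R A.init A'.init))

section Game
open Classical
variable {S S' L : Type} (A : TS S L) (A' : TS S' L) (F : Set L) (m : L)

lemma existsSucc (hne : ∃ l : L, l ∉ F ∧ l ≠ m) (v : GS S S' L) :
    ∃ p : L × GS S S' L, fullEdge A A' F m v p.1 p.2 := by
  obtain ⟨l0, h1, h2⟩ := hne
  by_cases hb : ∃ l u, GEdge A A' F m v l u
  · obtain ⟨l, u, he⟩ := hb; exact ⟨(l, u), Or.inl he⟩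
  · push_neg at hb; exact ⟨(l0, GS.err), Or.inr ⟨hb, h1, h2, rfl⟩⟩

lemma fault_label (hm : m ∉ F) {v w : GS S S' L} {l : L}
    (h : fullEdge A A' F m v l w) : l ∈ F ↔ isFaultV F w := by
  rcases h with h | ⟨_, hF, _, rfl⟩
  · cases h with
    | chA h1 h2 h3 => simp [isFaultV]
    | chA' h1 h2 => simp [isFaultV]
    | matchA' h1 h2 h3 => simp [isFaultV, h1]
    | matchA h1 h2 h3 => simp [isFaultV, h1]
    | mask h1 => simp [isFaultV, hm]
  · simp [isFaultV, hF]

lemma refB_not_fault {v : GS S S' L} (h : isRefB v = true) : ¬ isFaultV F v := by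
  cases v <;> simp_all [isRefB, isFaultV]

noncomputable def pickE (l0 : L) (v : GS S S' L) : L × GS S S' L :=
  if h : ∃ p : L × GS S S' L, fullEdge A A' F m v p.1 p.2 then Classical.choose h
  else (l0, GS.err)

lemma pickE_edge (l0 : L) (h1 : l0 ∉ F) (h2 : l0 ≠ m) (v : GS S S' L) :
    fullEdge A A' F m v (pickE A A' F m l0 v).1 (pickE A A' F m l0 v).2 := by
  unfold pickE; split
  · next h => exact Classical.choose_spec h
  · next h => exact absurd (existsSucc A A' F m ⟨l0, h1, h2⟩ v) h

noncomputable def pickU (l0 : L) (j' i' : ℕ) (v : GS S S' L) : L × GS S S' L :=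
  if h : ∃ p : L × GS S S' L, fullEdge A A' F m v p.1 p.2 ∧ p.2 ∈ UsetG A A' F m j' i'
  then Classical.choose h else pickE A A' F m l0 v

lemma pickU_edge (l0 : L) (h1 : l0 ∉ F) (h2 : l0 ≠ m) (j' i' : ℕ) (v : GS S S' L) :
    fullEdge A A' F m v (pickU A A' F m l0 j' i' v).1 (pickU A A' F m l0 j' i' v).2 := by
  unfold pickU; split
  · next h => exact (Classical.choose_spec h).1
  · exact pickE_edge A A' F m l0 h1 h2 v

lemma pickU_mem (l0 : L) (j' i' : ℕ) (v : GS S S' L)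
    (h : ∃ p : L × GS S S' L, fullEdge A A' F m v p.1 p.2 ∧ p.2 ∈ UsetG A A' F m j' i') :
    (pickU A A' F m l0 j' i' v).2 ∈ UsetG A A' F m j' i' := by
  unfold pickU; rw [dif_pos h]; exact (Classical.choose_spec h).2

noncomputable def stepT (p : ℕ × ℕ) (v0 w : GS S S' L) : ℕ × ℕ :=
  if h : ∃ q : ℕ × ℕ, q.1 + 1 ≤ p.1 ∧ q.2 + (if isFaultV F v0 then 1 else 0) ≤ p.2 ∧
      w ∈ UsetG A A' F m q.1 q.2
  then Classical.choose h else (0, 0)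

lemma stepT_spec (p : ℕ × ℕ) (v0 w : GS S S' L)
    (h : ∃ q : ℕ × ℕ, q.1 + 1 ≤ p.1 ∧ q.2 + (if isFaultV F v0 then 1 else 0) ≤ p.2 ∧
        w ∈ UsetG A A' F m q.1 q.2) :
    (stepT A A' F m p v0 w).1 + 1 ≤ p.1 ∧
    (stepT A A' F m p v0 w).2 + (if isFaultV F v0 then 1 else 0) ≤ p.2 ∧
    w ∈ UsetG A A' F m (stepT A A' F m p v0 w).1 (stepT A A' F m p v0 w).2 := by
  unfold stepT; rw [dif_pos h]; exact Classical.choose_spec h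

def headSt : List (GS S S' L × L) → GS S S' L → GS S S' L
  | [], v => v
  | (w, _) :: _, _ => w

noncomputable def targetSt : ℕ × ℕ → List (GS S S' L × L) → GS S S' L → ℕ × ℕ
  | p, [], _ => p
  | p, (v0, _) :: t, v => targetSt (stepT A A' F m p v0 (headSt t v)) t v

lemma targetSt_nil (p : ℕ × ℕ) (v : GS S S' L) : targetSt A A' F m p [] v = p := rfl

lemma targetSt_append : ∀ (h : List (GS S S' L × L)) (p : ℕ × ℕ) (vl : GS S S' L) (l : L)
    (v' : GS S S' L),
    targetSt A A' F m p (h ++ [(vl, l)]) v' = stepT A A' F m (targetSt A A' F m p h vl) vl v' := by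
  intro h
  induction h with
  | nil => intro p vl l v'; rfl
  | cons e t IH =>
    intro p vl l v'
    obtain ⟨v0, l0⟩ := e
    cases t with
    | nil => rfl
    | cons e2 t2 =>
      obtain ⟨w0, k0⟩ := e2
      simp only [List.cons_append, targetSt, headSt]
      exact IH _ _ _ _

noncomputable def refStrat (l0 : L) (j i : ℕ) : Strat (GS S S' L) L :=
  fun h v => pickU A A' F m l0 ((targetSt A A' F m (j, i) h v).1 - 1)
      (targetSt A A' F m (j, i) h v).2 v

end Game

lemma hist_zero {α L : Type} (ρ : ℕ → α) (σ : ℕ → L) : hist ρ σ 0 = [] := by simp [hist]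

lemma hist_succ {α L : Type} (ρ : ℕ → α) (σ : ℕ → L) (n : ℕ) :
    hist ρ σ (n+1) = hist ρ σ n ++ [(ρ n, σ n)] := by
  simp [hist, List.range_succ]

lemma Uset_pos {α : Type} (post : α → Set α) (r f : α → Prop) (e : α) {j i : ℕ} {v : α}
    (h : v ∈ Uset post r f e j i) : 1 ≤ j ∧ 1 ≤ i := by
  constructor
  · rcases j with _ | j
    · rw [Uset] at h; exact absurd h (Set.notMem_empty v)
    · omega
  · rcases i with _ | i
    · rcases j with _ | _ | j
      · rw [Uset] at h; exact absurd h (Set.notMem_empty v)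
      · rw [Uset] at h; simp at h
      · rw [Uset] at h; exact absurd h (Set.notMem_empty v)
    · omega

lemma Uset_one {α : Type} (post : α → Set α) (r f : α → Prop) (e : α) {i : ℕ} {v : α}
    (h : v ∈ Uset post r f e 1 i) : v = e ∧ i = 1 := by
  rw [Uset] at h
  by_cases hi : i = 1
  · rw [if_pos hi] at h; exact ⟨h, hi⟩
  · rw [if_neg hi] at h; exact absurd h (Set.notMem_empty v)

lemma Uset_i_le_j {α : Type} (post : α → Set α) (r f : α → Prop) (e : α) (j : ℕ) :
    ∀ i (v : α), v ∈ Uset post r f e j i → i ≤ j := by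
  induction j using Nat.strong_induction_on with
  | _ j IH =>
  intro i v hv
  match j, i with
  | 0, i => rw [Uset] at hv; exact absurd hv (Set.notMem_empty v)
  | 1, i =>
    by_cases hi : i = 1
    · omega
    · rw [Uset, if_neg hi] at hv; exact absurd hv (Set.notMem_empty v)
  | j+2, 0 => omega
  | j+2, i+1 =>
    rw [Uset] at hv
    simp only [Set.mem_union, Set.mem_setOf_eq] at hv
    rcases hv with (⟨_, w, _, hw⟩ | ⟨_, _, _, w, _, hw⟩) | ⟨_, _, _, w, _, hw⟩
    · have := IH (j+1) (by omega) (i+1) w hw; omega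
    · have := IH (j+1) (by omega) (i+1) w hw; omega
    · have := IH (j+1) (by omega) i w hw; omega

open Classical in
/-- if the refuter's initial node lies in `U^j_i` then `i ≤ j`;
moreover the refuter has a (valid) strategy such that every conforming play
reaches the error state within `j - 1` steps and contains at most `i`
fault-labelled transitions before reaching it. -/
theorem refuter_in_U_bounds {S S' L : Type} (A : TS S L) (A' : TS S' L)
    (F : Set L) (m : L) (hm : m ∉ F) (hne : ∃ σ : L, σ ∉ F ∧ σ ≠ m)
    (j i : ℕ) (h : GS.R A.init A'.init ∈ UsetG A A' F m j i) :
    i ≤ j ∧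
    ∃ π : RStrat A A' F m,
      ∀ ρ σ, IsPlay (fullEdge A A' F m) (GS.R A.init A'.init) ρ σ →
        Conf isRefB true π.1 ρ σ →
        ∃ n ≤ j - 1, ρ n = GS.err ∧
          (∑ k ∈ Finset.range n, (if σ k ∈ F then 1 else 0)) ≤ i := by
  have hU : GS.R A.init A'.init ∈ Uset (fun v => {w | ∃ l, fullEdge A A' F m v l w})
      (fun v => isRefB v = true) (isFaultV F) GS.err j i := h
  have herrNF : ¬ isFaultV F (GS.err : GS S S' L) := by simp [isFaultV]
  refine ⟨Uset_i_le_j _ _ _ _ j i _ hU, ?_⟩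
  obtain ⟨l0, hl0F, hl0m⟩ := hne
  refine ⟨⟨refStrat A A' F m l0 j i, ?_⟩, ?_⟩
  · intro hh v _
    exact pickU_edge A A' F m l0 hl0F hl0m _ _ v
  intro ρ σ hplay hconf
  obtain ⟨h0, hstep⟩ := hplay
  have hjpos : 1 ≤ j := (Uset_pos _ _ _ _ hU).1
  -- fault-count relation
  have hrel : ∀ n, (∑ x ∈ Finset.range n, (if σ x ∈ F then (1:ℕ) else 0))
      = (∑ x ∈ Finset.range n, (if isFaultV F (ρ x) then (1:ℕ) else 0))
        + (if isFaultV F (ρ n) then 1 else 0) := by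
    intro n
    induction n with
    | zero => simp [h0, isFaultV]
    | succ n IH =>
      rw [Finset.sum_range_succ, Finset.sum_range_succ, IH]
      have hl := fault_label A A' F m hm (hstep n)
      by_cases hb : σ n ∈ F
      · rw [if_pos hb, if_pos (hl.mp hb)]
      · rw [if_neg hb, if_neg (fun hh => hb (hl.mpr hh))]
  -- main invariant
  have key : ∀ n : ℕ,
      (∃ k ≤ n, ρ k = GS.err ∧ (∑ x ∈ Finset.range k, (if σ x ∈ F then 1 else 0)) ≤ i) ∨
      (ρ n ∈ UsetG A A' F m (targetSt A A' F m (j, i) (hist ρ σ n) (ρ n)).1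
          (targetSt A A' F m (j, i) (hist ρ σ n) (ρ n)).2 ∧
        (targetSt A A' F m (j, i) (hist ρ σ n) (ρ n)).1 + n ≤ j ∧
        (targetSt A A' F m (j, i) (hist ρ σ n) (ρ n)).2 +
          (∑ x ∈ Finset.range n, (if isFaultV F (ρ x) then 1 else 0)) ≤ i) := by
    intro n
    induction n with
    | zero =>
      right
      rw [hist_zero, targetSt_nil]
      refine ⟨?_, by omega, by simp⟩
      rw [h0]; exact h
    | succ n IH =>
      rcases IH with ⟨k, hk, h1, h2⟩ | ⟨hmem, hjb, hib⟩
      · exact Or.inl ⟨k, by omega, h1, h2⟩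
      set Tn := targetSt A A' F m (j, i) (hist ρ σ n) (ρ n) with hTn
      have hpos := Uset_pos _ _ _ _ hmem
      by_cases hone : Tn.1 = 1
      · -- already at the error state
        left
        have hmem1 : ρ n ∈ Uset (fun v => {w | ∃ l, fullEdge A A' F m v l w})
            (fun v => isRefB v = true) (isFaultV F) GS.err 1 Tn.2 := by
          rw [← hone]; exact hmem
        obtain ⟨herr, hi1⟩ := Uset_one _ _ _ _ hmem1
        refine ⟨n, by omega, herr, ?_⟩
        have hx := hrel n
        rw [herr, if_neg herrNF] at hx
        omega
      -- otherwise step the invariant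
      obtain ⟨a, ha⟩ : ∃ a, Tn.1 = a + 2 := ⟨Tn.1 - 2, by omega⟩
      obtain ⟨b, hb⟩ : ∃ b, Tn.2 = b + 1 := ⟨Tn.2 - 1, by omega⟩
      have hTs : targetSt A A' F m (j, i) (hist ρ σ (n+1)) (ρ (n+1))
          = stepT A A' F m Tn (ρ n) (ρ (n+1)) := by
        rw [hist_succ, targetSt_append, hTn]
      have hmem' : ρ n ∈ Uset (fun v => {w | ∃ l, fullEdge A A' F m v l w})
          (fun v => isRefB v = true) (isFaultV F) GS.err (a+2) (b+1) := by
        rw [← ha, ← hb]; exact hmem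
      rw [Uset] at hmem'
      simp only [Set.mem_union, Set.mem_setOf_eq] at hmem'
      have hq : ∃ q : ℕ × ℕ, q.1 + 1 ≤ Tn.1 ∧
          q.2 + (if isFaultV F (ρ n) then 1 else 0) ≤ Tn.2 ∧
          ρ (n+1) ∈ UsetG A A' F m q.1 q.2 := by
        rcases hmem' with (⟨href, w, hw, hwU⟩ | ⟨hnref, hnf, hall, -⟩) | ⟨hnref, hf, hall, -⟩
        · -- refuter node: the play follows our strategy
          have hc := hconf n href
          simp only [refStrat] at hc
          rw [← hTn] at hc
          have h2 : ρ (n+1) = (pickU A A' F m l0 (Tn.1 - 1) Tn.2 (ρ n)).2 :=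
            congrArg Prod.snd hc
          obtain ⟨l, hl⟩ := hw
          have hmemN : (pickU A A' F m l0 (Tn.1 - 1) Tn.2 (ρ n)).2
              ∈ UsetG A A' F m (Tn.1 - 1) Tn.2 := by
            apply pickU_mem
            refine ⟨(l, w), hl, ?_⟩
            rw [ha, hb]
            exact hwU
          rw [← h2] at hmemN
          have hnf : ¬ isFaultV F (ρ n) := refB_not_fault F href
          refine ⟨(Tn.1 - 1, Tn.2), ?_, ?_, hmemN⟩
          · show Tn.1 - 1 + 1 ≤ Tn.1; omega
          · show Tn.2 + (if isFaultV F (ρ n) then 1 else 0) ≤ Tn.2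
            rw [if_neg hnf]; omega
        · -- non-fault verifier node
          obtain ⟨j', hj'⟩ := hall (ρ (n+1)) ⟨σ n, hstep n⟩
          refine ⟨((j' : ℕ), b + 1), ?_, ?_, hj'⟩
          · show (j' : ℕ) + 1 ≤ Tn.1; have := j'.isLt; omega
          · show b + 1 + (if isFaultV F (ρ n) then 1 else 0) ≤ Tn.2
            rw [if_neg hnf]; omega
        · -- fault verifier node
          obtain ⟨i', j', hj'⟩ := hall (ρ (n+1)) ⟨σ n, hstep n⟩
          refine ⟨((j' : ℕ), (i' : ℕ)), ?_, ?_, hj'⟩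
          · show (j' : ℕ) + 1 ≤ Tn.1; have := j'.isLt; omega
          · show (i' : ℕ) + (if isFaultV F (ρ n) then 1 else 0) ≤ Tn.2
            rw [if_pos hf]; have := i'.isLt; omega
      obtain ⟨hq1, hq2, hq3⟩ := stepT_spec A A' F m Tn (ρ n) (ρ (n+1)) hq
      right
      rw [hTs]
      refine ⟨hq3, by omega, ?_⟩
      rw [Finset.sum_range_succ]
      by_cases hf : isFaultV F (ρ n)
      · rw [if_pos hf] at hq2 ⊢; omega
      · rw [if_neg hf] at hq2 ⊢; omega
  rcases key (j - 1) with ⟨k, hk, h1, h2⟩ | ⟨hmem, hjb, hib⟩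
  · exact ⟨k, hk, h1, h2⟩
  · have hpos := Uset_pos _ _ _ _ hmem
    have hone : (targetSt A A' F m (j, i) (hist ρ σ (j-1)) (ρ (j-1))).1 = 1 := by omega
    have hmem1 := hmem
    rw [hone] at hmem1
    obtain ⟨herr, hi1⟩ := Uset_one _ _ _ _ hmem1
    refine ⟨j - 1, le_refl _, herr, ?_⟩
    have hx := hrel (j - 1)
    rw [herr, if_neg herrNF] at hx
    omega
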